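/- In the setting of Bernoulli observation and Bernoulli(q) splitting, let the test index (i*,j*) given S be uniform on S^c. Then for fixed S₀ and fixed set S₁ disjoint from S₀ with (i_l, j_l) ∉ S₀ ∪ S₁, P(S_cal = S₁, (i*,j*) = (i_l,j_l) | S_tr = S₀, |S|=n) = (1/(d₁d₂ - n)) · [∏_{(i,j)∈S₁} p_{ij}/(1-p_{ij})] / [Σ_{A ∈ Ω} ∏_{(i',j')∈A} p_{i'j'}/(1-p_{i'j'})], where Ω = {A ⊆ [d₁]×[d₂] : |A| = n - |S₀|, A ∩ S₀ = ∅}. -/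

import Mathlib

open MeasureTheory ProbabilityTheory Finset

lemma meas_preimage_finite {Ω γ : Type*} [MeasurableSpace Ω] [MeasurableSpace γ]
    [Fintype γ] [MeasurableSingletonClass γ] (μ : MeasureTheory.Measure Ω)
    {g : Ω → γ} (hg : Measurable g) (s : Set γ) [DecidablePred (· ∈ s)] :
    μ (g ⁻¹' s) = ∑ c ∈ Finset.univ.filter (· ∈ s), μ (g ⁻¹' {c}) := by
  rw [← measure_biUnion_finset]
  · congr 1
    ext ω
    simp [Set.mem_iUnion]
  · intro a _ b _ hne
    apply Set.disjoint_left.mpr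
    intro ω ha hb
    exact hne (by simp only [Set.mem_preimage, Set.mem_singleton_iff] at ha hb; rw [← ha, ← hb])
  · intro c _
    exact hg (measurableSet_singleton c)

lemma sum_bool_constrained {ι : Type*} [Fintype ι] [DecidableEq ι]
    (U V : Finset ι) (hUV : Disjoint U V) (q : ℝ) :
    ∑ w : ι → Bool, (if (∀ ij ∈ U, w ij = true) ∧ (∀ ij ∈ V, w ij = false)
        then ∏ ij, (if w ij then q else 1 - q) else 0)
      = q ^ U.card * (1 - q) ^ V.card := by
  classical
  set t : ι → Finset Bool := fun ij => if ij ∈ U then {true} else if ij ∈ V then {false} else Finset.univ with ht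
  have hiff : ∀ w : ι → Bool,
      ((∀ ij ∈ U, w ij = true) ∧ (∀ ij ∈ V, w ij = false)) ↔ ∀ ij, w ij ∈ t ij := by
    intro w
    constructor
    · rintro ⟨h1, h2⟩ ij
      by_cases hU : ij ∈ U
      · simp [ht, hU, h1 ij hU]
      · by_cases hV : ij ∈ V
        · simp [ht, hU, hV, h2 ij hV]
        · simp [ht, hU, hV]
    · intro h
      constructor
      · intro ij hU
        have := h ij
        simpa [ht, hU] using this
      · intro ij hV
        have hU : ij ∉ U := fun h' => (Finset.disjoint_left.mp hUV h') hV
        have := h ij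
        simpa [ht, hU, hV] using this
  have h1 : (∑ w : ι → Bool, (if (∀ ij ∈ U, w ij = true) ∧ (∀ ij ∈ V, w ij = false)
        then ∏ ij, (if w ij then q else 1 - q) else 0))
      = ∑ w ∈ Fintype.piFinset t, ∏ ij, (if w ij then q else 1 - q) := by
    rw [← Finset.sum_filter]
    apply Finset.sum_congr _ (fun _ _ => rfl)
    ext w
    simp [Fintype.mem_piFinset, hiff w]
  have hpu := Finset.prod_univ_sum t (fun ij b => if b then q else 1 - q)
  rw [h1, ← hpu]
  have hfac : ∀ ij, (∑ b ∈ t ij, (if b then q else 1 - q))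
      = if ij ∈ U then q else if ij ∈ V then 1 - q else 1 := by
    intro ij
    by_cases hU : ij ∈ U <;> by_cases hV : ij ∈ V <;> simp [ht, hU, hV] <;> ring
  rw [Finset.prod_congr rfl (fun ij _ => hfac ij)]
  rw [← Finset.prod_sdiff (Finset.subset_univ (U ∪ V))]
  have h2 : ∏ ij ∈ univ \ (U ∪ V), (if ij ∈ U then q else if ij ∈ V then 1 - q else 1) = 1 := by
    apply Finset.prod_eq_one
    intro ij hij
    simp only [Finset.mem_sdiff, Finset.mem_union] at hij
    push_neg at hij
    simp [hij.2.1, hij.2.2]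
  rw [h2, one_mul, Finset.prod_union hUV]
  have h3 : ∏ ij ∈ U, (if ij ∈ U then q else if ij ∈ V then 1 - q else 1) = q ^ U.card := by
    rw [Finset.prod_congr rfl (fun ij h => if_pos h), Finset.prod_const]
  have h4 : ∏ ij ∈ V, (if ij ∈ U then q else if ij ∈ V then 1 - q else 1) = (1 - q) ^ V.card := by
    rw [Finset.prod_congr rfl (fun ij h => by
      rw [if_neg (fun h' => (Finset.disjoint_left.mp hUV h') h), if_pos h]), Finset.prod_const]
  rw [h3, h4]

lemma prod_indicator_split {ι : Type*} [Fintype ι] [DecidableEq ι]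
    (p : ι → ℝ) (hp : ∀ ij, p ij ∈ Set.Ioo (0:ℝ) 1) (S : Finset ι) :
    ∏ ij, (if ij ∈ S then p ij else 1 - p ij)
      = (∏ ij ∈ S, p ij / (1 - p ij)) * ∏ ij, (1 - p ij) := by
  rw [← Finset.prod_sdiff (Finset.subset_univ S),
      ← Finset.prod_sdiff (Finset.subset_univ S) (f := fun ij => 1 - p ij)]
  have h1 : ∏ ij ∈ univ \ S, (if ij ∈ S then p ij else 1 - p ij) = ∏ ij ∈ univ \ S, (1 - p ij) :=
    Finset.prod_congr rfl (fun ij h => by rw [if_neg (Finset.mem_sdiff.mp h).2])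
  have h2 : ∏ ij ∈ S, (if ij ∈ S then p ij else 1 - p ij) = ∏ ij ∈ S, p ij :=
    Finset.prod_congr rfl (fun ij h => if_pos h)
  have h3 : ∏ ij ∈ S, p ij = (∏ ij ∈ S, p ij / (1 - p ij)) * ∏ ij ∈ S, (1 - p ij) := by
    rw [← Finset.prod_mul_distrib]
    exact Finset.prod_congr rfl fun ij _ =>
      (div_mul_cancel₀ _ (by have := (hp ij).2; intro h; linarith : (1 - p ij) ≠ 0)).symm
  rw [h1, h2, h3]; ring

lemma sum_fun_bool_eq_sum_finset {ι : Type*} [Fintype ι] [DecidableEq ι] {M : Type*}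
    [AddCommMonoid M] (f : Finset ι → M) :
    ∑ z : ι → Bool, f (Finset.univ.filter (fun ij => z ij = true)) = ∑ S : Finset ι, f S := by
  apply Finset.sum_nbij' (i := fun z => Finset.univ.filter (fun ij => z ij = true))
    (j := fun S ij => decide (ij ∈ S))
  · intro z _; exact Finset.mem_univ _
  · intro S _; exact Finset.mem_univ _
  · intro z _
    funext ij
    by_cases h : z ij = true <;> simp [h]
  · intro S _
    ext ij
    simp
  · intro z _; rfl

lemma cell_measure {Ω ι : Type*} [MeasurableSpace Ω] [Fintype ι]
    (μ : MeasureTheory.Measure Ω)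
    (Z W : ι → Ω → Bool)
    (hindep : iIndepFun (Sum.elim Z W) μ)
    (z w : ι → Bool) :
    μ {ω | (∀ ij, Z ij ω = z ij) ∧ (∀ ij, W ij ω = w ij)}
      = (∏ ij, μ (Z ij ⁻¹' {z ij})) * ∏ ij, μ (W ij ⁻¹' {w ij}) := by
  have h := (ProbabilityTheory.iIndepFun_iff_measure_inter_preimage_eq_mul.mp hindep)
    Finset.univ (sets := fun k => {Sum.elim z w k}) (fun k _ => measurableSet_singleton _)
  have hset : (⋂ k ∈ Finset.univ, (Sum.elim Z W k) ⁻¹' {Sum.elim z w k})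
      = {ω | (∀ ij, Z ij ω = z ij) ∧ (∀ ij, W ij ω = w ij)} := by
    ext ω
    simp [Sum.forall]
  rw [hset] at h
  rw [h, Fintype.prod_sum_type]
  rfl


/-- With a test index drawn uniformly from the unobserved set (conditionally
on the observation pattern, independently of the split), the conditional probability that
the calibration set equals S₁ and the test point equals a fixed location l, given
S_tr = S₀ and |S| = n, equals (1/(d₁d₂-n)) · ∏_{S₁} odds / Σ_{A ∈ Ω} ∏_A odds, where Ω
is the collection of sets of size n - |S₀| disjoint from S₀. -/
theorem split_with_test_point_law {Ω : Type*} [MeasurableSpace Ω]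
    (μ : Measure Ω) [IsProbabilityMeasure μ]
    (d₁ d₂ : ℕ) (p : Fin d₁ × Fin d₂ → ℝ) (hp : ∀ ij, p ij ∈ Set.Ioo (0:ℝ) 1)
    (q : ℝ) (hq : q ∈ Set.Ioo (0:ℝ) 1)
    (Z W : Fin d₁ × Fin d₂ → Ω → Bool) (T : Ω → Fin d₁ × Fin d₂)
    (hZmeas : ∀ ij, Measurable (Z ij)) (hWmeas : ∀ ij, Measurable (W ij))
    (hTmeas : Measurable T)
    (hindep : iIndepFun (Sum.elim Z W) μ)
    (hbernZ : ∀ ij, (μ {ω | Z ij ω = true}).toReal = p ij)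
    (hbernW : ∀ ij, (μ {ω | W ij ω = true}).toReal = q)
    -- T | S ~ Unif(Sᶜ), conditionally independent of the split W given Z:
    (hTunif : ∀ (z wf : Fin d₁ × Fin d₂ → Bool) (t : Fin d₁ × Fin d₂), z t = false →
      (μ {ω | T ω = t ∧ (∀ ij, Z ij ω = z ij) ∧ (∀ ij, W ij ω = wf ij)}).toReal
        = (μ {ω | (∀ ij, Z ij ω = z ij) ∧ (∀ ij, W ij ω = wf ij)}).toReal
            / ((Finset.univ.filter (fun ij => z ij = false)).card : ℝ))
    (n : ℕ) (hn : n < d₁ * d₂)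
    (S₀ S₁ : Finset (Fin d₁ × Fin d₂)) (l : Fin d₁ × Fin d₂)
    (hdisj : Disjoint S₀ S₁) (hl : l ∉ S₀ ∪ S₁) (hcard : S₀.card + S₁.card = n) :
    (μ[|{ω | (∀ ij, (Z ij ω = true ∧ W ij ω = true) ↔ ij ∈ S₀) ∧
             (Finset.univ.filter (fun ij => Z ij ω = true)).card = n}]
        {ω | (∀ ij, (Z ij ω = true ∧ W ij ω = false) ↔ ij ∈ S₁) ∧ T ω = l}).toReal =
      (1 / ((d₁ : ℝ) * d₂ - n)) *
        ((∏ ij ∈ S₁, p ij / (1 - p ij)) /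
          (∑ A ∈ (Finset.univ.powersetCard (n - S₀.card)).filter (fun A => Disjoint A S₀),
            ∏ ij ∈ A, p ij / (1 - p ij))) := by
  classical
  obtain ⟨hq0, hq1⟩ := hq
  have hDcard : Fintype.card (Fin d₁ × Fin d₂) = d₁ * d₂ := by simp
  have hcard0 : S₀.card ≤ n := Nat.le.intro hcard
  have hnD : n ≤ d₁ * d₂ := le_of_lt hn
  have hS1card : S₁.card = n - S₀.card := by omega
  -- constants
  set K : ℝ := ∏ ij, (1 - p ij) with hK
  set OS₀ : ℝ := ∏ ij ∈ S₀, p ij / (1 - p ij) with hOS₀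
  set OS₁ : ℝ := ∏ ij ∈ S₁, p ij / (1 - p ij) with hOS₁
  set R : ℝ := ∑ A ∈ (Finset.univ.powersetCard (n - S₀.card)).filter (fun A => Disjoint A S₀),
      ∏ ij ∈ A, p ij / (1 - p ij) with hR
  set c : ℝ := q ^ S₀.card * (1 - q) ^ (n - S₀.card) with hc
  have hodds : ∀ ij, 0 < p ij / (1 - p ij) := fun ij =>
    div_pos (hp ij).1 (by have := (hp ij).2; linarith)
  have hKpos : 0 < K := Finset.prod_pos (fun ij _ => by have := (hp ij).2; linarith)
  have hOS₀pos : 0 < OS₀ := Finset.prod_pos fun ij _ => hodds ij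
  have hOS₁pos : 0 < OS₁ := Finset.prod_pos fun ij _ => hodds ij
  have hcpos : 0 < c := mul_pos (pow_pos hq0 _) (pow_pos (by linarith) _)
  have hRpos : 0 < R := by
    rw [hR]
    apply Finset.sum_pos (fun A _ => Finset.prod_pos fun ij _ => hodds ij)
    obtain ⟨A, hA1, hA2⟩ := Finset.exists_subset_card_eq (s := Finset.univ \ S₀)
      (n := n - S₀.card) (by
        rw [Finset.card_sdiff_of_subset (Finset.subset_univ _), Finset.card_univ, hDcard]; omega)
    exact ⟨A, Finset.mem_filter.mpr ⟨Finset.mem_powersetCard_univ.mpr hA2,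
      Finset.disjoint_left.mpr fun x hx => (Finset.mem_sdiff.mp (hA1 hx)).2⟩⟩
  have hDn : (0:ℝ) < (d₁:ℝ) * d₂ - n := by
    have : (n:ℝ) < (d₁:ℝ)*d₂ := by exact_mod_cast hn
    linarith
  -- marginals
  have hZval : ∀ ij (b : Bool), (μ (Z ij ⁻¹' {b})).toReal = if b then p ij else 1 - p ij := by
    intro ij b
    cases b with
    | true => exact hbernZ ij
    | false =>
      have hms : MeasurableSet {ω | Z ij ω = true} := hZmeas ij (measurableSet_singleton true)
      have hcompl : Z ij ⁻¹' {false} = {ω | Z ij ω = true}ᶜ := by ext ω; simp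
      rw [hcompl, prob_compl_eq_one_sub hms,
        ENNReal.toReal_sub_of_le prob_le_one ENNReal.one_ne_top, ENNReal.toReal_one, hbernZ ij]
      simp
  have hWval : ∀ ij (b : Bool), (μ (W ij ⁻¹' {b})).toReal = if b then q else 1 - q := by
    intro ij b
    cases b with
    | true => exact hbernW ij
    | false =>
      have hms : MeasurableSet {ω | W ij ω = true} := hWmeas ij (measurableSet_singleton true)
      have hcompl : W ij ⁻¹' {false} = {ω | W ij ω = true}ᶜ := by ext ω; simp
      rw [hcompl, prob_compl_eq_one_sub hms,
        ENNReal.toReal_sub_of_le prob_le_one ENNReal.one_ne_top, ENNReal.toReal_one, hbernW ij]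
      simp
  have cellReal : ∀ z w : Fin d₁ × Fin d₂ → Bool,
      (μ {ω | (∀ ij, Z ij ω = z ij) ∧ (∀ ij, W ij ω = w ij)}).toReal
        = (∏ ij, (if z ij then p ij else 1 - p ij)) * ∏ ij, (if w ij then q else 1 - q) := by
    intro z w
    rw [cell_measure μ Z W hindep z w, ENNReal.toReal_mul, ENNReal.toReal_prod,
      ENNReal.toReal_prod]
    congr 1
    · exact Finset.prod_congr rfl fun ij _ => hZval ij (z ij)
    · exact Finset.prod_congr rfl fun ij _ => hWval ij (w ij)
  -- configuration map
  set cfg : Ω → ((Fin d₁ × Fin d₂ → Bool) × (Fin d₁ × Fin d₂ → Bool)) :=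
    fun ω => (fun ij => Z ij ω, fun ij => W ij ω) with hcfg
  have hcfgmeas : Measurable cfg :=
    (measurable_pi_lambda _ fun ij => hZmeas ij).prodMk
      (measurable_pi_lambda _ fun ij => hWmeas ij)
  have hpre : ∀ cc : ((Fin d₁ × Fin d₂ → Bool) × (Fin d₁ × Fin d₂ → Bool)),
      cfg ⁻¹' {cc} = {ω | (∀ ij, Z ij ω = cc.1 ij) ∧ (∀ ij, W ij ω = cc.2 ij)} := by
    intro cc
    ext ω
    simp [hcfg, Prod.ext_iff, funext_iff]
  set SE : Set ((Fin d₁ × Fin d₂ → Bool) × (Fin d₁ × Fin d₂ → Bool)) :=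
    {cc | (∀ ij, (cc.1 ij = true ∧ cc.2 ij = true) ↔ ij ∈ S₀) ∧
      (Finset.univ.filter (fun ij => cc.1 ij = true)).card = n} with hSE
  have hEset : {ω | (∀ ij, (Z ij ω = true ∧ W ij ω = true) ↔ ij ∈ S₀) ∧
      (Finset.univ.filter (fun ij => Z ij ω = true)).card = n} = cfg ⁻¹' SE := rfl
  have hEmeas : MeasurableSet (cfg ⁻¹' SE) := hcfgmeas (Set.toFinite SE).measurableSet
  have hSEiff : ∀ z w : Fin d₁ × Fin d₂ → Bool, ((z, w) ∈ SE) ↔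
      (((Finset.univ.filter (fun ij => z ij = true)).card = n
          ∧ S₀ ⊆ Finset.univ.filter (fun ij => z ij = true)) ∧
       ((∀ ij ∈ S₀, w ij = true)
          ∧ (∀ ij ∈ Finset.univ.filter (fun ij => z ij = true) \ S₀, w ij = false))) := by
    intro z w
    constructor
    · rintro ⟨h1, h2⟩
      refine ⟨⟨h2, fun ij hij => ?_⟩, fun ij hij => ((h1 ij).mpr hij).2, fun ij hij => ?_⟩
      · exact Finset.mem_filter.mpr ⟨Finset.mem_univ _, ((h1 ij).mpr hij).1⟩
      · rcases Finset.mem_sdiff.mp hij with ⟨hz, hns⟩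
        by_contra hw
        rw [Bool.not_eq_false] at hw
        exact hns ((h1 ij).mp ⟨(Finset.mem_filter.mp hz).2, hw⟩)
    · rintro ⟨⟨hcardz, hsub⟩, hw1, hw2⟩
      refine ⟨fun ij => ⟨?_, ?_⟩, hcardz⟩
      · rintro ⟨hz, hw⟩
        by_contra hns
        have hmem : ij ∈ Finset.univ.filter (fun ij => z ij = true) \ S₀ :=
          Finset.mem_sdiff.mpr ⟨Finset.mem_filter.mpr ⟨Finset.mem_univ _, hz⟩, hns⟩
        have hw' : w ij = true := hw
        rw [hw2 ij hmem] at hw'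
        exact Bool.false_ne_true hw'
      · intro hij
        exact ⟨(Finset.mem_filter.mp (hsub hij)).2, hw1 ij hij⟩
  -- denominator
  have hE : (μ (cfg ⁻¹' SE)).toReal = c * (K * (OS₀ * R)) := by
    rw [meas_preimage_finite μ hcfgmeas SE, ENNReal.toReal_sum (fun _ _ => measure_ne_top μ _)]
    have hcell : ∀ cc ∈ Finset.univ.filter (· ∈ SE), (μ (cfg ⁻¹' {cc})).toReal
        = (∏ ij, (if cc.1 ij then p ij else 1 - p ij)) * ∏ ij, (if cc.2 ij then q else 1 - q) := by
      intro cc _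
      rw [hpre cc, cellReal]
    rw [Finset.sum_congr rfl hcell, Finset.sum_filter, Fintype.sum_prod_type]
    have hinner : ∀ z : Fin d₁ × Fin d₂ → Bool,
        (∑ w : Fin d₁ × Fin d₂ → Bool, if (z, w) ∈ SE then
            (∏ ij, (if z ij then p ij else 1 - p ij)) * ∏ ij, (if w ij then q else 1 - q) else 0)
        = if (Finset.univ.filter (fun ij => z ij = true)).card = n
              ∧ S₀ ⊆ Finset.univ.filter (fun ij => z ij = true)
          then (∏ ij, (if z ij then p ij else 1 - p ij)) * c else 0 := by
      intro z
      by_cases hz : (Finset.univ.filter (fun ij => z ij = true)).card = n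
          ∧ S₀ ⊆ Finset.univ.filter (fun ij => z ij = true)
      · rw [if_pos hz]
        have e1 : ∀ w : Fin d₁ × Fin d₂ → Bool,
            (if (z, w) ∈ SE then
              (∏ ij, (if z ij then p ij else 1 - p ij)) * ∏ ij, (if w ij then q else 1 - q) else 0)
            = (∏ ij, (if z ij then p ij else 1 - p ij)) *
              (if (∀ ij ∈ S₀, w ij = true)
                  ∧ (∀ ij ∈ Finset.univ.filter (fun ij => z ij = true) \ S₀, w ij = false)
               then ∏ ij, (if w ij then q else 1 - q) else 0) := by
          intro w
          by_cases hw : (∀ ij ∈ S₀, w ij = true)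
              ∧ (∀ ij ∈ Finset.univ.filter (fun ij => z ij = true) \ S₀, w ij = false)
          · rw [if_pos hw, if_pos ((hSEiff z w).mpr ⟨hz, hw⟩)]
          · rw [if_neg hw, if_neg (fun h => hw ((hSEiff z w).mp h).2), mul_zero]
        rw [Finset.sum_congr rfl (fun w _ => e1 w), ← Finset.mul_sum,
          sum_bool_constrained S₀ _ Finset.sdiff_disjoint.symm q,
          Finset.card_sdiff_of_subset hz.2, hz.1, hc]
      · rw [if_neg hz]
        exact Finset.sum_eq_zero fun w _ => if_neg (fun h => hz ((hSEiff z w).mp h).1)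
    rw [Finset.sum_congr rfl (fun z _ => hinner z)]
    have hpz : ∀ z : Fin d₁ × Fin d₂ → Bool,
        (if (Finset.univ.filter (fun ij => z ij = true)).card = n
              ∧ S₀ ⊆ Finset.univ.filter (fun ij => z ij = true)
          then (∏ ij, (if z ij then p ij else 1 - p ij)) * c else 0)
        = (fun S : Finset (Fin d₁ × Fin d₂) => if S.card = n ∧ S₀ ⊆ S
            then (∏ ij, (if ij ∈ S then p ij else 1 - p ij)) * c else 0)
            (Finset.univ.filter (fun ij => z ij = true)) := by
      intro z
      have hprodz : (∏ ij, (if z ij then p ij else 1 - p ij))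
          = ∏ ij, (if ij ∈ Finset.univ.filter (fun ij => z ij = true) then p ij else 1 - p ij) :=
        Finset.prod_congr rfl fun ij _ => by by_cases h : z ij = true <;> simp [h]
      simp only [hprodz]
    rw [Finset.sum_congr rfl (fun z _ => hpz z),
      sum_fun_bool_eq_sum_finset (fun S : Finset (Fin d₁ × Fin d₂) =>
        if S.card = n ∧ S₀ ⊆ S then (∏ ij, (if ij ∈ S then p ij else 1 - p ij)) * c else 0),
      ← Finset.sum_filter]
    have hps : ∀ S ∈ Finset.univ.filter
        (fun S : Finset (Fin d₁ × Fin d₂) => S.card = n ∧ S₀ ⊆ S),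
        (∏ ij, (if ij ∈ S then p ij else 1 - p ij)) * c
          = ((∏ ij ∈ S, p ij / (1 - p ij)) * K) * c := by
      intro S _
      rw [prod_indicator_split p hp S, ← hK]
    rw [Finset.sum_congr rfl hps]
    have hbij : (∑ S ∈ Finset.univ.filter
          (fun S : Finset (Fin d₁ × Fin d₂) => S.card = n ∧ S₀ ⊆ S),
        ((∏ ij ∈ S, p ij / (1 - p ij)) * K) * c)
        = ∑ A ∈ (Finset.univ.powersetCard (n - S₀.card)).filter (fun A => Disjoint A S₀),
            ((OS₀ * ∏ ij ∈ A, p ij / (1 - p ij)) * K) * c := by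
      apply Finset.sum_nbij' (i := fun S => S \ S₀) (j := fun A => S₀ ∪ A)
      · intro S hS
        obtain ⟨-, h1, h2⟩ := Finset.mem_filter.mp hS
        refine Finset.mem_filter.mpr ⟨Finset.mem_powersetCard_univ.mpr ?_, Finset.sdiff_disjoint⟩
        rw [Finset.card_sdiff_of_subset h2, h1]
      · intro A hA
        obtain ⟨hA1, hA2⟩ := Finset.mem_filter.mp hA
        rw [Finset.mem_powersetCard_univ] at hA1
        refine Finset.mem_filter.mpr ⟨Finset.mem_univ _, ?_, Finset.subset_union_left⟩
        rw [Finset.card_union_of_disjoint hA2.symm, hA1]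
        omega
      · intro S hS
        obtain ⟨-, -, h2⟩ := Finset.mem_filter.mp hS
        exact Finset.union_sdiff_of_subset h2
      · intro A hA
        obtain ⟨-, hA2⟩ := Finset.mem_filter.mp hA
        exact Finset.union_sdiff_cancel_left hA2.symm
      · intro S hS
        obtain ⟨-, -, h2⟩ := Finset.mem_filter.mp hS
        rw [hOS₀, ← Finset.prod_sdiff h2 (f := fun ij => p ij / (1 - p ij))]
        ring
    rw [hbij]
    have hstep : ∀ A ∈ (Finset.univ.powersetCard (n - S₀.card)).filter (fun A => Disjoint A S₀),
        ((OS₀ * ∏ ij ∈ A, p ij / (1 - p ij)) * K) * c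
          = (∏ ij ∈ A, p ij / (1 - p ij)) * (OS₀ * K * c) := fun A _ => by ring
    rw [Finset.sum_congr rfl hstep, ← Finset.sum_mul, ← hR]
    ring
  -- numerator
  set zstar : Fin d₁ × Fin d₂ → Bool := fun ij => decide (ij ∈ S₀ ∪ S₁) with hzstar
  have hsuppstar : Finset.univ.filter (fun ij => zstar ij = true) = S₀ ∪ S₁ := by
    ext ij; simp [hzstar]
  have hcardstar : (S₀ ∪ S₁).card = n := by
    rw [Finset.card_union_of_disjoint hdisj]; exact hcard
  set SS : Set (((Fin d₁ × Fin d₂ → Bool) × (Fin d₁ × Fin d₂ → Bool)) × (Fin d₁ × Fin d₂)) :=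
    {x | (x.1 ∈ SE ∧ (∀ ij, (x.1.1 ij = true ∧ x.1.2 ij = false) ↔ ij ∈ S₁)) ∧ x.2 = l}
      with hSS
  set G : Ω → (((Fin d₁ × Fin d₂ → Bool) × (Fin d₁ × Fin d₂ → Bool)) × (Fin d₁ × Fin d₂)) :=
    fun ω => (cfg ω, T ω) with hG
  have hGmeas : Measurable G := hcfgmeas.prodMk hTmeas
  have hEF : cfg ⁻¹' SE ∩ {ω | (∀ ij, (Z ij ω = true ∧ W ij ω = false) ↔ ij ∈ S₁) ∧ T ω = l}
      = G ⁻¹' SS := by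
    ext ω
    simp only [Set.mem_inter_iff, Set.mem_preimage, Set.mem_setOf_eq, hG, hSS, hSE, hcfg]
    tauto
  have hSSiff : ∀ x : (((Fin d₁ × Fin d₂ → Bool) × (Fin d₁ × Fin d₂ → Bool)) × (Fin d₁ × Fin d₂)),
      x ∈ SS ↔ ((x.1.1 = zstar
        ∧ ((∀ ij ∈ S₀, x.1.2 ij = true) ∧ ∀ ij ∈ S₁, x.1.2 ij = false)) ∧ x.2 = l) := by
    rintro ⟨⟨z, w⟩, t⟩
    simp only [hSS, Set.mem_setOf_eq, hSE]
    constructor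
    · rintro ⟨⟨⟨h1, h2⟩, h3⟩, h4⟩
      refine ⟨⟨?_, fun ij hij => ((h1 ij).mpr hij).2, fun ij hij => ((h3 ij).mpr hij).2⟩, h4⟩
      funext ij
      rcases hzz : z ij with _ | _
      · have hn0 : ij ∉ S₀ := fun h => by
          have h' := ((h1 ij).mpr h).1
          rw [hzz] at h'
          exact Bool.false_ne_true h'
        have hn1 : ij ∉ S₁ := fun h => by
          have h' := ((h3 ij).mpr h).1
          rw [hzz] at h'
          exact Bool.false_ne_true h'
        simp [hzstar, hn0, hn1]
      · rcases hww : w ij with _ | _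
        · have hmem : ij ∈ S₁ := (h3 ij).mp ⟨hzz, hww⟩
          simp [hzstar, Finset.mem_union, hmem]
        · have hmem : ij ∈ S₀ := (h1 ij).mp ⟨hzz, hww⟩
          simp [hzstar, Finset.mem_union, hmem]
    · rintro ⟨⟨hz, hw1, hw2⟩, h4⟩
      have hz' : z = zstar := hz
      subst hz'
      refine ⟨⟨⟨fun ij => ⟨?_, ?_⟩, ?_⟩, fun ij => ⟨?_, ?_⟩⟩, h4⟩
      · rintro ⟨hzt, hwt⟩
        have hmem : ij ∈ S₀ ∪ S₁ := by simpa [hzstar] using hzt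
        rcases Finset.mem_union.mp hmem with h | h
        · exact h
        · have hwt' : w ij = true := hwt
          rw [hw2 ij h] at hwt'
          exact absurd hwt' (by simp)
      · intro hij
        exact ⟨by simp [hzstar, Finset.mem_union, hij], hw1 ij hij⟩
      · rw [hsuppstar, hcardstar]
      · rintro ⟨hzt, hwf⟩
        have hmem : ij ∈ S₀ ∪ S₁ := by simpa [hzstar] using hzt
        rcases Finset.mem_union.mp hmem with h | h
        · have hwf' : w ij = false := hwf
          rw [hw1 ij h] at hwf'
          exact absurd hwf' (by simp)
        · exact h
      · intro hij
        exact ⟨by simp [hzstar, Finset.mem_union, hij], hw2 ij hij⟩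
  have hEFnum : (μ (G ⁻¹' SS)).toReal
      = ((K * (OS₀ * (OS₁ * c)))) / ((d₁:ℝ) * d₂ - n) := by
    have hGpre : ∀ x : (((Fin d₁ × Fin d₂ → Bool) × (Fin d₁ × Fin d₂ → Bool)) × (Fin d₁ × Fin d₂)),
        G ⁻¹' {x} = {ω | T ω = x.2 ∧ (∀ ij, Z ij ω = x.1.1 ij) ∧ (∀ ij, W ij ω = x.1.2 ij)} := by
      intro x
      ext ω
      simp [hG, hcfg, Prod.ext_iff, funext_iff]
      tauto
    have hzstarl : zstar l = false := by
      simp only [hzstar]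
      exact decide_eq_false hl
    have hcardfalse : ((Finset.univ.filter (fun ij => zstar ij = false)).card : ℝ)
        = (d₁:ℝ) * d₂ - n := by
      have hset2 : Finset.univ.filter (fun ij => zstar ij = false)
          = Finset.univ \ (S₀ ∪ S₁) := by
        ext ij; simp [hzstar]
      rw [hset2, Finset.card_sdiff_of_subset (Finset.subset_univ _), Finset.card_univ, hDcard, hcardstar]
      rw [Nat.cast_sub hnD]
      push_cast
      ring
    have hpzstar : (∏ ij, (if zstar ij then p ij else 1 - p ij)) = (OS₀ * OS₁) * K := by
      have h1 : (∏ ij, (if zstar ij then p ij else 1 - p ij))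
          = ∏ ij, (if ij ∈ S₀ ∪ S₁ then p ij else 1 - p ij) :=
        Finset.prod_congr rfl fun ij _ => by
          by_cases h : ij ∈ S₀ ∪ S₁ <;> simp only [hzstar, decide_eq_true_eq] <;> simp [h]
      rw [h1, prod_indicator_split p hp, Finset.prod_union hdisj, ← hK, ← hOS₀, ← hOS₁]
    rw [meas_preimage_finite μ hGmeas SS, ENNReal.toReal_sum (fun _ _ => measure_ne_top μ _)]
    have hterm : ∀ x ∈ Finset.univ.filter (· ∈ SS), (μ (G ⁻¹' {x})).toReal
        = ((∏ ij, (if zstar ij then p ij else 1 - p ij)) / ((d₁:ℝ)*d₂ - n))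
            * ∏ ij, (if x.1.2 ij then q else 1 - q) := by
      intro x hx
      obtain ⟨⟨hz1, hw1, hw2⟩, hx2⟩ := (hSSiff x).mp (Finset.mem_filter.mp hx).2
      rw [hGpre x, hx2, hz1, hTunif zstar x.1.2 l hzstarl, cellReal, hcardfalse]
      ring
    rw [Finset.sum_congr rfl hterm, Finset.sum_filter]
    have hx3 : ∀ x : (((Fin d₁ × Fin d₂ → Bool) × (Fin d₁ × Fin d₂ → Bool)) × (Fin d₁ × Fin d₂)),
        (if x ∈ SS then
            ((∏ ij, (if zstar ij then p ij else 1 - p ij)) / ((d₁:ℝ)*d₂ - n))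
              * ∏ ij, (if x.1.2 ij then q else 1 - q) else 0)
        = (if ((x.1.1 = zstar
              ∧ ((∀ ij ∈ S₀, x.1.2 ij = true) ∧ ∀ ij ∈ S₁, x.1.2 ij = false)) ∧ x.2 = l) then
            ((∏ ij, (if zstar ij then p ij else 1 - p ij)) / ((d₁:ℝ)*d₂ - n))
              * ∏ ij, (if x.1.2 ij then q else 1 - q) else 0) := by
      intro x
      by_cases h : x ∈ SS
      · rw [if_pos h, if_pos ((hSSiff x).mp h)]
      · rw [if_neg h, if_neg (fun h' => h ((hSSiff x).mpr h'))]
    rw [Finset.sum_congr rfl (fun x _ => hx3 x), Fintype.sum_prod_type]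
    have hx4 : ∀ cc : ((Fin d₁ × Fin d₂ → Bool) × (Fin d₁ × Fin d₂ → Bool)),
        (∑ t : Fin d₁ × Fin d₂,
          if ((cc.1 = zstar
              ∧ ((∀ ij ∈ S₀, cc.2 ij = true) ∧ ∀ ij ∈ S₁, cc.2 ij = false)) ∧ t = l) then
            ((∏ ij, (if zstar ij then p ij else 1 - p ij)) / ((d₁:ℝ)*d₂ - n))
              * ∏ ij, (if cc.2 ij then q else 1 - q) else 0)
        = (if (cc.1 = zstar
              ∧ ((∀ ij ∈ S₀, cc.2 ij = true) ∧ ∀ ij ∈ S₁, cc.2 ij = false)) then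
            ((∏ ij, (if zstar ij then p ij else 1 - p ij)) / ((d₁:ℝ)*d₂ - n))
              * ∏ ij, (if cc.2 ij then q else 1 - q) else 0) := by
      intro cc
      by_cases h : (cc.1 = zstar
          ∧ ((∀ ij ∈ S₀, cc.2 ij = true) ∧ ∀ ij ∈ S₁, cc.2 ij = false))
      · rw [if_pos h, Finset.sum_congr rfl (fun t _ => if_congr (and_iff_right h) rfl rfl),
          Finset.sum_ite_eq' Finset.univ l, if_pos (Finset.mem_univ l)]
      · rw [if_neg h]
        exact Finset.sum_eq_zero fun t _ => if_neg (fun hh => h hh.1)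
    rw [Finset.sum_congr rfl (fun cc _ => hx4 cc), Fintype.sum_prod_type]
    have hx5 : ∀ z : Fin d₁ × Fin d₂ → Bool,
        (∑ w : Fin d₁ × Fin d₂ → Bool,
          if (z = zstar ∧ ((∀ ij ∈ S₀, w ij = true) ∧ ∀ ij ∈ S₁, w ij = false)) then
            ((∏ ij, (if zstar ij then p ij else 1 - p ij)) / ((d₁:ℝ)*d₂ - n))
              * ∏ ij, (if w ij then q else 1 - q) else 0)
        = (if z = zstar then
            ((∏ ij, (if zstar ij then p ij else 1 - p ij)) / ((d₁:ℝ)*d₂ - n))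
              * (q ^ S₀.card * (1 - q) ^ S₁.card) else 0) := by
      intro z
      by_cases h : z = zstar
      · rw [if_pos h]
        have e2 : ∀ w : Fin d₁ × Fin d₂ → Bool,
            (if (z = zstar ∧ ((∀ ij ∈ S₀, w ij = true) ∧ ∀ ij ∈ S₁, w ij = false)) then
              ((∏ ij, (if zstar ij then p ij else 1 - p ij)) / ((d₁:ℝ)*d₂ - n))
                * ∏ ij, (if w ij then q else 1 - q) else 0)
            = ((∏ ij, (if zstar ij then p ij else 1 - p ij)) / ((d₁:ℝ)*d₂ - n))
                * (if ((∀ ij ∈ S₀, w ij = true) ∧ ∀ ij ∈ S₁, w ij = false) then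
                    ∏ ij, (if w ij then q else 1 - q) else 0) := by
          intro w
          by_cases hw : ((∀ ij ∈ S₀, w ij = true) ∧ ∀ ij ∈ S₁, w ij = false)
          · rw [if_pos hw, if_pos ⟨h, hw⟩]
          · rw [if_neg hw, if_neg (fun h' => hw h'.2), mul_zero]
        rw [Finset.sum_congr rfl (fun w _ => e2 w), ← Finset.mul_sum,
          sum_bool_constrained S₀ S₁ hdisj q]
      · rw [if_neg h]
        exact Finset.sum_eq_zero fun w _ => if_neg (fun h' => h h'.1)
    rw [Finset.sum_congr rfl (fun z _ => hx5 z), Finset.sum_ite_eq' Finset.univ zstar]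
    rw [if_pos (Finset.mem_univ _), hpzstar, hS1card, hc]
    field_simp
  rw [hEset, ProbabilityTheory.cond_apply hEmeas, hEF, ENNReal.toReal_mul, ENNReal.toReal_inv,
    hE, hEFnum]
  have hKne : K ≠ 0 := ne_of_gt hKpos
  have hcne : c ≠ 0 := ne_of_gt hcpos
  have hOS₀ne : OS₀ ≠ 0 := ne_of_gt hOS₀pos
  have hRne : R ≠ 0 := ne_of_gt hRpos
  have hDne : (d₁:ℝ) * d₂ - n ≠ 0 := ne_of_gt hDn
  field_simp
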